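/- Let μ₊, μ₋ be probability measures on ℝ^Λ with densities proportional to exp(-H_±(φ)), where H_±(φ) = H₀(φ) ∓ ⟨η,φ⟩, and suppose H₀(φ+ψ) + H₀(φ-ψ) - 2H₀(φ) ≤ E(ψ) pointwise for some constant E(ψ). Let ν_± = μ_±(· + ψ) be the shifted measures. Then H(ν₊|μ₊) + H(ν₋|μ₋) ≤ 2 E(ψ); in particular each individual relative entropy is at most 2E(ψ). -/

import Mathlib

open MeasureTheory

/-- Relative entropy (Kullback–Leibler divergence) `H(ν|μ) = ∫ log (dν/dμ) dν`. -/
noncomputable def relEnt {Ω : Type*} [MeasurableSpace Ω] (ν μ : Measure Ω) : ℝ :=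
  ∫ x, Real.log ((ν.rnDeriv μ x).toReal) ∂ν

/-- The Gibbs measure on `ℝ^Λ` with Hamiltonian `H`: the probability measure with density
proportional to `exp (-H φ)` with respect to Lebesgue measure. -/
noncomputable def gibbsOf {Λ : Type*} [Fintype Λ] (H : (Λ → ℝ) → ℝ) :
    Measure (Λ → ℝ) :=
  (ENNReal.ofReal (∫ φ, Real.exp (-H φ)))⁻¹ •
    volume.withDensity (fun φ => ENNReal.ofReal (Real.exp (-H φ)))

lemma relEnt_eq_integral_llr {Ω : Type*} [MeasurableSpace Ω] (ν μ : Measure Ω) :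
    relEnt ν μ = ∫ x, llr ν μ x ∂ν := rfl

open Real in
/-- Nonnegativity of relative entropy for probability measures. -/
lemma relEnt_nonneg {Ω : Type*} [MeasurableSpace Ω] (ν μ : Measure Ω)
    [IsProbabilityMeasure ν] [IsProbabilityMeasure μ]
    (hac : ν ≪ μ) (hint : Integrable (llr ν μ) ν) : 0 ≤ relEnt ν μ := by
  rw [relEnt_eq_integral_llr]
  have h1 : (fun x => - llr ν μ x) =ᵐ[ν] llr μ ν := neg_llr hac
  have h2 : (fun x ↦ exp (llr μ ν x)) =ᵐ[ν] fun x ↦ (μ.rnDeriv ν x).toReal :=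
    exp_llr_of_ac' μ ν hac
  have hmono : ∀ᵐ x ∂ν, - llr ν μ x ≤ (μ.rnDeriv ν x).toReal - 1 := by
    filter_upwards [h1, h2] with x hx1 hx2
    have h3 := Real.add_one_le_exp (llr μ ν x)
    rw [hx2] at h3
    rw [hx1]
    linarith
  have hint2 : Integrable (fun x => (μ.rnDeriv ν x).toReal - 1) ν :=
    (Measure.integrable_toReal_rnDeriv).sub (integrable_const 1)
  have hle : ∫ x, - llr ν μ x ∂ν ≤ ∫ x, ((μ.rnDeriv ν x).toReal - 1) ∂ν :=
    integral_mono_ae hint.neg hint2 hmono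
  have h3 : ∫ x, ((μ.rnDeriv ν x).toReal - 1) ∂ν ≤ 0 := by
    rw [integral_sub Measure.integrable_toReal_rnDeriv (integrable_const 1)]
    simp only [integral_const, measure_univ, probReal_univ, ENNReal.toReal_one, smul_eq_mul, one_mul]
    have h4 : ∫ x, (μ.rnDeriv ν x).toReal ∂ν ≤ (μ Set.univ).toReal := by
      have := Measure.setIntegral_toReal_rnDeriv_le (μ := μ) (ν := ν)
        (s := Set.univ) (by simp)
      simpa using this
    simp only [measure_univ, ENNReal.toReal_one] at h4
    linarith
  rw [integral_neg] at hle
  linarith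

open Real in
lemma gibbsOf_eq_tilted {Λ : Type*} [Fintype Λ] (H : (Λ → ℝ) → ℝ)
    (hH : Measurable H) (hpos : 0 < ∫ φ : Λ → ℝ, Real.exp (-H φ)) :
    gibbsOf H = (volume : Measure (Λ → ℝ)).tilted (fun φ => -H φ) := by
  rw [gibbsOf, Measure.tilted]
  have h : (fun φ : Λ → ℝ => ENNReal.ofReal (exp (-H φ) / ∫ φ : Λ → ℝ, exp (-H φ))) =
      (ENNReal.ofReal (∫ φ : Λ → ℝ, exp (-H φ)))⁻¹ •
        fun φ : Λ → ℝ => ENNReal.ofReal (exp (-H φ)) := by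
    funext φ
    simp only [Pi.smul_apply, smul_eq_mul]
    rw [div_eq_mul_inv, ENNReal.ofReal_mul' (by positivity), mul_comm,
      ENNReal.ofReal_inv_of_pos hpos]
  rw [h, withDensity_smul _ (f := fun φ => ENNReal.ofReal (exp (-H φ))) (hH.neg.exp.ennreal_ofReal)]

open Real in
lemma map_tilted_vol {Λ : Type*} [Fintype Λ] {e e' : (Λ → ℝ) → (Λ → ℝ)}
    (he : MeasurePreserving e (volume : Measure (Λ → ℝ)) volume)
    (he' : MeasurePreserving e' (volume : Measure (Λ → ℝ)) volume)
    (hinv : ∀ x, e' (e x) = x)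
    {f : (Λ → ℝ) → ℝ} (hf : Measurable f) :
    Measure.map e (volume.tilted f) = (volume : Measure (Λ → ℝ)).tilted (f ∘ e') := by
  have hZ : (∫ x : Λ → ℝ, Real.exp ((f ∘ e') x)) = ∫ x : Λ → ℝ, Real.exp (f x) := by
    calc (∫ x : Λ → ℝ, Real.exp (f (e' x)))
        = ∫ y : Λ → ℝ, Real.exp (f y) ∂(Measure.map e' volume) :=
          (integral_map he'.measurable.aemeasurable
            (by rw [he'.map_eq]; exact hf.exp.aestronglyMeasurable)).symm
      _ = ∫ x : Λ → ℝ, Real.exp (f x) := by rw [he'.map_eq]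
  set Z := ∫ x : Λ → ℝ, Real.exp (f x) with hZdef
  set d : (Λ → ℝ) → ENNReal := fun x => ENNReal.ofReal (Real.exp (f (e' x)) / Z) with hd
  have hdm : Measurable d := (((hf.comp he'.measurable).exp).div_const Z).ennreal_ofReal
  have h1 : (volume : Measure (Λ → ℝ)).tilted f = volume.withDensity (d ∘ e) := by
    rw [Measure.tilted]
    congr 1
    funext x
    simp only [Function.comp_apply, hd, hinv x]
    rfl
  have h2 : (volume : Measure (Λ → ℝ)).tilted (f ∘ e') = volume.withDensity d := by
    rw [Measure.tilted]
    congr 1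
    funext x
    simp only [Function.comp_apply] at hZ ⊢
    rw [hZ, hd]
  rw [h1, h2]
  ext s hs
  rw [Measure.map_apply he.measurable hs, withDensity_apply _ (he.measurable hs),
    withDensity_apply _ hs]
  simp only [Function.comp_apply]
  rw [← setLIntegral_map hs hdm he.measurable, he.map_eq]

/-- **Symmetrized entropy bound.** Let `μ₊, μ₋` be the Gibbs measures on `ℝ^Λ` with
Hamiltonians `H_±(φ) = H₀(φ) ∓ ⟨η, φ⟩` (`H₀` even), and suppose the symmetrized increment
satisfies `H₀(φ+ψ) + H₀(φ-ψ) - 2 H₀(φ) ≤ E` pointwise. Let `ν_± = μ_±(· + ψ)` be the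
shifted measures. Then `H(ν₊|μ₊) + H(ν₋|μ₋) ≤ 2E`, and in particular each individual
relative entropy is at most `2E`. -/
theorem symmetrized_entropy_bound {Λ : Type*} [Fintype Λ]
    (H₀ : (Λ → ℝ) → ℝ) (hH₀ : Measurable H₀) (heven : ∀ φ, H₀ (-φ) = H₀ φ)
    (η ψ : Λ → ℝ) (E : ℝ)
    (hE : ∀ φ, H₀ (φ + ψ) + H₀ (φ - ψ) - 2 * H₀ φ ≤ E)
    (Hp Hm : (Λ → ℝ) → ℝ)
    (hHp : ∀ φ, Hp φ = H₀ φ - ∑ i, η i * φ i)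
    (hHm : ∀ φ, Hm φ = H₀ φ + ∑ i, η i * φ i)
    (hIntp : Integrable (fun φ : Λ → ℝ => Real.exp (-Hp φ)))
    (hIntm : Integrable (fun φ : Λ → ℝ => Real.exp (-Hm φ)))
    (hposp : 0 < ∫ φ : Λ → ℝ, Real.exp (-Hp φ))
    (hposm : 0 < ∫ φ : Λ → ℝ, Real.exp (-Hm φ))
    (hllrp : Integrable
      (fun φ => Real.log (((Measure.map (fun φ => φ + ψ) (gibbsOf Hp)).rnDeriv
        (gibbsOf Hp) φ).toReal)) (Measure.map (fun φ => φ + ψ) (gibbsOf Hp)))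
    (hllrm : Integrable
      (fun φ => Real.log (((Measure.map (fun φ => φ + ψ) (gibbsOf Hm)).rnDeriv
        (gibbsOf Hm) φ).toReal)) (Measure.map (fun φ => φ + ψ) (gibbsOf Hm))) :
    relEnt (Measure.map (fun φ => φ + ψ) (gibbsOf Hp)) (gibbsOf Hp)
      + relEnt (Measure.map (fun φ => φ + ψ) (gibbsOf Hm)) (gibbsOf Hm) ≤ 2 * E ∧
    relEnt (Measure.map (fun φ => φ + ψ) (gibbsOf Hp)) (gibbsOf Hp) ≤ 2 * E ∧
    relEnt (Measure.map (fun φ => φ + ψ) (gibbsOf Hm)) (gibbsOf Hm) ≤ 2 * E := by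
  classical
  -- measurability
  have hsum : Measurable fun φ : Λ → ℝ => ∑ i, η i * φ i :=
    Finset.measurable_sum _ (fun i _ => by fun_prop)
  have hHpm : Measurable Hp := by
    have : Hp = fun φ => H₀ φ - ∑ i, η i * φ i := funext hHp
    rw [this]; exact hH₀.sub hsum
  have hHmm : Measurable Hm := by
    have : Hm = fun φ => H₀ φ + ∑ i, η i * φ i := funext hHm
    rw [this]; exact hH₀.add hsum
  -- measure preserving maps
  have hT : MeasurePreserving (fun φ : Λ → ℝ => φ + ψ) volume volume :=
    measurePreserving_add_right volume ψ
  have hS : MeasurePreserving (fun φ : Λ → ℝ => φ - ψ) volume volume :=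
    measurePreserving_sub_right volume ψ
  have hN : MeasurePreserving (fun φ : Λ → ℝ => -φ) volume volume :=
    Measure.measurePreserving_neg volume
  -- Gibbs measures as tilted measures
  have hgp : gibbsOf Hp = (volume : Measure (Λ → ℝ)).tilted (fun φ => -Hp φ) :=
    gibbsOf_eq_tilted Hp hHpm hposp
  have hgm : gibbsOf Hm = (volume : Measure (Λ → ℝ)).tilted (fun φ => -Hm φ) :=
    gibbsOf_eq_tilted Hm hHmm hposm
  have hIp : Integrable (fun φ : Λ → ℝ => Real.exp ((fun φ => -Hp φ) φ)) volume := hIntp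
  have hIm : Integrable (fun φ : Λ → ℝ => Real.exp ((fun φ => -Hm φ) φ)) volume := hIntm
  haveI : IsProbabilityMeasure (gibbsOf Hp) := by
    rw [hgp]; exact isProbabilityMeasure_tilted hIp
  haveI : IsProbabilityMeasure (gibbsOf Hm) := by
    rw [hgm]; exact isProbabilityMeasure_tilted hIm
  haveI : IsProbabilityMeasure (Measure.map (fun φ : Λ → ℝ => φ + ψ) (gibbsOf Hp)) :=
    Measure.isProbabilityMeasure_map hT.measurable.aemeasurable
  haveI : IsProbabilityMeasure (Measure.map (fun φ : Λ → ℝ => φ + ψ) (gibbsOf Hm)) :=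
    Measure.isProbabilityMeasure_map hT.measurable.aemeasurable
  -- the shifted measure is a tilt of the Gibbs measure
  set gp : (Λ → ℝ) → ℝ := fun φ => Hp φ - Hp (φ - ψ) with hgp_def
  set gm : (Λ → ℝ) → ℝ := fun φ => Hm φ - Hm (φ - ψ) with hgm_def
  have hgp_meas : Measurable gp := by
    rw [hgp_def]
    exact hHpm.sub (hHpm.comp hS.measurable)
  have hgm_meas : Measurable gm := by
    rw [hgm_def]
    exact hHmm.sub (hHmm.comp hS.measurable)
  have hmapp : Measure.map (fun φ : Λ → ℝ => φ + ψ) (gibbsOf Hp) = (gibbsOf Hp).tilted gp := by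
    rw [hgp, map_tilted_vol hT hS (fun x => by simp) (f := fun φ => -Hp φ) hHpm.neg, tilted_tilted hIp gp]
    congr 1
    funext x
    simp only [Function.comp_apply, Pi.add_apply, hgp_def]
    ring
  have hmapm : Measure.map (fun φ : Λ → ℝ => φ + ψ) (gibbsOf Hm) = (gibbsOf Hm).tilted gm := by
    rw [hgm, map_tilted_vol hT hS (fun x => by simp) (f := fun φ => -Hm φ) hHmm.neg, tilted_tilted hIm gm]
    congr 1
    funext x
    simp only [Function.comp_apply, Pi.add_apply, hgm_def]
    ring
  -- integrability of exp ∘ g wrt the Gibbs measure, and its integral is 1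
  have key : ∀ (H : (Λ → ℝ) → ℝ), Measurable H →
      Integrable (fun φ : Λ → ℝ => Real.exp (-H φ)) →
      (0 < ∫ φ : Λ → ℝ, Real.exp (-H φ)) →
      Integrable (fun φ => Real.exp (H φ - H (φ - ψ))) (gibbsOf H) ∧
      ∫ φ, Real.exp (H φ - H (φ - ψ)) ∂(gibbsOf H) = 1 := by
    intro H hHmeas hHint hHpos
    have hgeq : gibbsOf H = (volume : Measure (Λ → ℝ)).tilted (fun φ => -H φ) :=
      gibbsOf_eq_tilted H hHmeas hHpos
    have hshift : Integrable (fun φ : Λ → ℝ => Real.exp (-H (φ - ψ))) volume := by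
      have := (hS.integrable_comp hHmeas.neg.exp.aestronglyMeasurable).mpr hHint
      simpa [Function.comp_def] using this
    have hZshift : (∫ φ : Λ → ℝ, Real.exp (-H (φ - ψ))) = ∫ φ : Λ → ℝ, Real.exp (-H φ) := by
      calc (∫ φ : Λ → ℝ, Real.exp (-H (φ - ψ)))
          = ∫ y : Λ → ℝ, Real.exp (-H y) ∂(Measure.map (fun φ : Λ → ℝ => φ - ψ) volume) :=
            (integral_map hS.measurable.aemeasurable
              (by rw [hS.map_eq]; exact hHmeas.neg.exp.aestronglyMeasurable)).symm
        _ = _ := by rw [hS.map_eq]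
    constructor
    · rw [hgeq, Measure.tilted]
      rw [integrable_withDensity_iff (f := fun φ => ENNReal.ofReal (Real.exp (-H φ) / ∫ φ : Λ → ℝ, Real.exp (-H φ))) (hHmeas.neg.exp.div_const _).ennreal_ofReal
        (Filter.Eventually.of_forall fun x => ENNReal.ofReal_lt_top)]
      have heq : (fun φ : Λ → ℝ => Real.exp (H φ - H (φ - ψ)) *
          (ENNReal.ofReal (Real.exp (-H φ) / ∫ φ : Λ → ℝ, Real.exp (-H φ))).toReal) =
          fun φ : Λ → ℝ => Real.exp (-H (φ - ψ)) / ∫ φ : Λ → ℝ, Real.exp (-H φ) := by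
        funext φ
        rw [ENNReal.toReal_ofReal (by positivity), ← mul_div_assoc, ← Real.exp_add]
        ring_nf
      rw [heq]
      exact hshift.div_const _
    · rw [hgeq, integral_exp_tilted]
      have heq : (∫ φ : Λ → ℝ, Real.exp (((fun φ => -H φ) + fun φ => H φ - H (φ - ψ)) φ)) =
          ∫ φ : Λ → ℝ, Real.exp (-H (φ - ψ)) := by
        congr 1
        funext φ
        simp only [Pi.add_apply]
        ring_nf
      rw [heq, hZshift, div_self hHpos.ne']
  obtain ⟨hexp_p, hint1_p⟩ := key Hp hHpm hIntp hposp
  obtain ⟨hexp_m, hint1_m⟩ := key Hm hHmm hIntm hposm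
  -- a.e. identification of the log-likelihood ratio
  have hllr_ae_p : llr (Measure.map (fun φ : Λ → ℝ => φ + ψ) (gibbsOf Hp)) (gibbsOf Hp)
      =ᵐ[Measure.map (fun φ : Λ → ℝ => φ + ψ) (gibbsOf Hp)] gp := by
    rw [hmapp]
    refine (tilted_absolutelyContinuous (gibbsOf Hp) gp).ae_le ?_
    have h0 := log_rnDeriv_tilted_left_self (μ := gibbsOf Hp) (f := gp) hexp_p
    filter_upwards [h0] with x hx
    rw [llr, hx, hint1_p, Real.log_one, sub_zero]
  have hllr_ae_m : llr (Measure.map (fun φ : Λ → ℝ => φ + ψ) (gibbsOf Hm)) (gibbsOf Hm)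
      =ᵐ[Measure.map (fun φ : Λ → ℝ => φ + ψ) (gibbsOf Hm)] gm := by
    rw [hmapm]
    refine (tilted_absolutelyContinuous (gibbsOf Hm) gm).ae_le ?_
    have h0 := log_rnDeriv_tilted_left_self (μ := gibbsOf Hm) (f := gm) hexp_m
    filter_upwards [h0] with x hx
    rw [llr, hx, hint1_m, Real.log_one, sub_zero]
  have hllrp' : Integrable (llr (Measure.map (fun φ : Λ → ℝ => φ + ψ) (gibbsOf Hp))
      (gibbsOf Hp)) (Measure.map (fun φ : Λ → ℝ => φ + ψ) (gibbsOf Hp)) := hllrp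
  have hllrm' : Integrable (llr (Measure.map (fun φ : Λ → ℝ => φ + ψ) (gibbsOf Hm))
      (gibbsOf Hm)) (Measure.map (fun φ : Λ → ℝ => φ + ψ) (gibbsOf Hm)) := hllrm
  -- relEnt as integral of g over the shifted measure, then change of variables
  have hval_p : relEnt (Measure.map (fun φ : Λ → ℝ => φ + ψ) (gibbsOf Hp)) (gibbsOf Hp)
      = ∫ x, (Hp (x + ψ) - Hp x) ∂(gibbsOf Hp) := by
    rw [relEnt_eq_integral_llr, integral_congr_ae hllr_ae_p,
      integral_map hT.measurable.aemeasurable hgp_meas.aestronglyMeasurable]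
    congr 1
    funext x
    simp [hgp_def]
  have hval_m : relEnt (Measure.map (fun φ : Λ → ℝ => φ + ψ) (gibbsOf Hm)) (gibbsOf Hm)
      = ∫ x, (Hm (x + ψ) - Hm x) ∂(gibbsOf Hm) := by
    rw [relEnt_eq_integral_llr, integral_congr_ae hllr_ae_m,
      integral_map hT.measurable.aemeasurable hgm_meas.aestronglyMeasurable]
    congr 1
    funext x
    simp [hgm_def]
  -- integrability of the integrands
  have hint_p : Integrable (fun x => Hp (x + ψ) - Hp x) (gibbsOf Hp) := by
    have h1 : Integrable gp (Measure.map (fun φ : Λ → ℝ => φ + ψ) (gibbsOf Hp)) :=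
      hllrp'.congr hllr_ae_p
    have h2 := (integrable_map_measure hgp_meas.aestronglyMeasurable
      hT.measurable.aemeasurable).mp h1
    refine h2.congr ?_
    refine Filter.Eventually.of_forall fun x => ?_
    simp [hgp_def, Function.comp]
  have hint_m : Integrable (fun x => Hm (x + ψ) - Hm x) (gibbsOf Hm) := by
    have h1 : Integrable gm (Measure.map (fun φ : Λ → ℝ => φ + ψ) (gibbsOf Hm)) :=
      hllrm'.congr hllr_ae_m
    have h2 := (integrable_map_measure hgm_meas.aestronglyMeasurable
      hT.measurable.aemeasurable).mp h1
    refine h2.congr ?_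
    refine Filter.Eventually.of_forall fun x => ?_
    simp [hgm_def, Function.comp]
  -- reflection: gibbsOf Hm is the image of gibbsOf Hp under negation
  have hmp_neg : ∀ x : Λ → ℝ, Hm (-x) = Hp x := by
    intro x
    rw [hHm, hHp, heven]
    simp [mul_neg, Finset.sum_neg_distrib, sub_eq_add_neg]
  have hreflect : gibbsOf Hm = Measure.map (fun x : Λ → ℝ => -x) (gibbsOf Hp) := by
    rw [hgp, hgm, map_tilted_vol hN hN (fun x => neg_neg x) (f := fun φ => -Hp φ) hHpm.neg]
    congr 1
    funext x
    simp only [Function.comp_apply]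
    have h1 := hmp_neg (-x)
    rw [neg_neg] at h1
    rw [h1]
  -- express the minus-integral over gibbsOf Hp
  have hfm_meas : Measurable fun x : Λ → ℝ => Hm (x + ψ) - Hm x :=
    (hHmm.comp hT.measurable).sub hHmm
  have hval_m' : (∫ x, (Hm (x + ψ) - Hm x) ∂(gibbsOf Hm))
      = ∫ x, (Hp (x - ψ) - Hp x) ∂(gibbsOf Hp) := by
    rw [hreflect, integral_map hN.measurable.aemeasurable hfm_meas.aestronglyMeasurable]
    congr 1
    funext x
    have h1 : -x + ψ = -(x - ψ) := by abel
    rw [h1, hmp_neg (x - ψ), hmp_neg x]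
  have hint_m' : Integrable (fun x => Hp (x - ψ) - Hp x) (gibbsOf Hp) := by
    rw [hreflect] at hint_m
    have h2 := (integrable_map_measure hfm_meas.aestronglyMeasurable
      hN.measurable.aemeasurable).mp hint_m
    refine h2.congr (Filter.Eventually.of_forall fun x => ?_)
    simp only [Function.comp_apply]
    have h1 : -x + ψ = -(x - ψ) := by abel
    rw [h1, hmp_neg (x - ψ), hmp_neg x]
  -- pointwise bound on the symmetrized increment
  have hpt : ∀ x : Λ → ℝ, (Hp (x + ψ) - Hp x) + (Hp (x - ψ) - Hp x) ≤ E := by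
    intro x
    have h := hE x
    have hs : (∑ i, η i * (x + ψ) i) + (∑ i, η i * (x - ψ) i) = 2 * ∑ i, η i * x i := by
      simp only [Pi.add_apply, Pi.sub_apply, mul_add, mul_sub]
      rw [Finset.sum_add_distrib, Finset.sum_sub_distrib]
      ring
    rw [hHp, hHp, hHp]
    linarith
  -- the sum of the two relative entropies is at most E
  have hsumE : relEnt (Measure.map (fun φ : Λ → ℝ => φ + ψ) (gibbsOf Hp)) (gibbsOf Hp)
      + relEnt (Measure.map (fun φ : Λ → ℝ => φ + ψ) (gibbsOf Hm)) (gibbsOf Hm) ≤ E := by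
    rw [hval_p, hval_m, hval_m', ← integral_add hint_p hint_m']
    calc (∫ x, ((Hp (x + ψ) - Hp x) + (Hp (x - ψ) - Hp x)) ∂(gibbsOf Hp))
        ≤ ∫ _x, E ∂(gibbsOf Hp) :=
          integral_mono (hint_p.add hint_m') (integrable_const E)
            (fun x => hpt x)
      _ = E := by simp
  -- nonnegativity of each relative entropy
  have hac_p : Measure.map (fun φ : Λ → ℝ => φ + ψ) (gibbsOf Hp) ≪ gibbsOf Hp := by
    rw [hmapp]; exact tilted_absolutelyContinuous _ _
  have hac_m : Measure.map (fun φ : Λ → ℝ => φ + ψ) (gibbsOf Hm) ≪ gibbsOf Hm := by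
    rw [hmapm]; exact tilted_absolutelyContinuous _ _
  have ha0 : 0 ≤ relEnt (Measure.map (fun φ : Λ → ℝ => φ + ψ) (gibbsOf Hp)) (gibbsOf Hp) :=
    relEnt_nonneg _ _ hac_p hllrp'
  have hb0 : 0 ≤ relEnt (Measure.map (fun φ : Λ → ℝ => φ + ψ) (gibbsOf Hm)) (gibbsOf Hm) :=
    relEnt_nonneg _ _ hac_m hllrm'
  refine ⟨by linarith, by linarith, by linarith⟩
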